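/- Let ≤ be a total order on a commutative hemiring H such that a < b implies a+c < b+c for all c, and a < b together with 0 < c implies ac < bc. Let F be a field equipped with an H-pseudonorm |·| : F → H. Then every finite-dimensional F-algebra R admits an H-pseudonorm, i.e. there exists ‖·‖ : R → H such that ‖a‖ ≥ 0 with ‖a‖ = 0 iff a = 0, ‖a−b‖ ≤ ‖a‖+‖b‖, and ‖ab‖ ≤ ‖a‖·‖b‖ for all a,b ∈ R. -/

import Mathlib

section Aux

variable {H : Type*} [NonUnitalCommSemiring H] [LinearOrder H]

lemma aux_add_le (hadd : ∀ a b c : H, a < b → a + c < b + c)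
    {a b : H} (c : H) (h : a ≤ b) : a + c ≤ b + c := by
  rcases h.lt_or_eq with h | h
  · exact (hadd _ _ _ h).le
  · rw [h]

lemma aux_add_le₂ (hadd : ∀ a b c : H, a < b → a + c < b + c)
    {a b c d : H} (h1 : a ≤ b) (h2 : c ≤ d) : a + c ≤ b + d := by
  refine (aux_add_le hadd c h1).trans ?_
  rw [add_comm b c, add_comm b d]
  exact aux_add_le hadd b h2

lemma aux_le_add (hadd : ∀ a b c : H, a < b → a + c < b + c)
    {c : H} (a : H) (hc : 0 ≤ c) : a ≤ a + c := by
  have := aux_add_le hadd a hc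
  rwa [zero_add, add_comm c a] at this

lemma aux_mul_le (hmul : ∀ a b c : H, a < b → 0 < c → a * c < b * c)
    {a b c : H} (h : a ≤ b) (hc : 0 ≤ c) : a * c ≤ b * c := by
  rcases hc.lt_or_eq with hc | hc
  · rcases h.lt_or_eq with h | h
    · exact (hmul _ _ _ h hc).le
    · rw [h]
  · rw [← hc, mul_zero, mul_zero]

lemma aux_mul_le_left (hmul : ∀ a b c : H, a < b → 0 < c → a * c < b * c)
    {a b c : H} (h : a ≤ b) (hc : 0 ≤ c) : c * a ≤ c * b := by
  rw [mul_comm c a, mul_comm c b]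
  exact aux_mul_le hmul h hc

lemma aux_mul_nonneg (hmul : ∀ a b c : H, a < b → 0 < c → a * c < b * c)
    {a b : H} (ha : 0 ≤ a) (hb : 0 ≤ b) : 0 ≤ a * b := by
  have := aux_mul_le hmul ha hb
  rwa [zero_mul] at this

lemma aux_sum_nonneg (hadd : ∀ a b c : H, a < b → a + c < b + c)
    {ι : Type*} (s : Finset ι) (f : ι → H) (h : ∀ i ∈ s, 0 ≤ f i) :
    0 ≤ ∑ i ∈ s, f i :=
  Finset.sum_induction f (fun x => 0 ≤ x)
    (fun a b ha hb => by simpa using aux_add_le₂ hadd ha hb) le_rfl h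

lemma aux_sum_le (hadd : ∀ a b c : H, a < b → a + c < b + c)
    {ι : Type*} (s : Finset ι) (f g : ι → H) (h : ∀ i ∈ s, f i ≤ g i) :
    ∑ i ∈ s, f i ≤ ∑ i ∈ s, g i := by
  classical
  induction s using Finset.induction with
  | empty => simp
  | insert _ _ hi ih =>
    rw [Finset.sum_insert hi, Finset.sum_insert hi]
    exact aux_add_le₂ hadd (h _ (Finset.mem_insert_self _ _))
      (ih fun i hi' => h i (Finset.mem_insert_of_mem hi'))

lemma aux_single_le_sum (hadd : ∀ a b c : H, a < b → a + c < b + c)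
    {ι : Type*} (s : Finset ι) (f : ι → H) (h : ∀ i ∈ s, 0 ≤ f i)
    {i : ι} (hi : i ∈ s) : f i ≤ ∑ j ∈ s, f j := by
  classical
  rw [← Finset.add_sum_erase _ _ hi]
  exact aux_le_add hadd _ (aux_sum_nonneg hadd _ _ fun j hj =>
    h j (Finset.mem_of_mem_erase hj))

lemma aux_nsmul_mul (n : ℕ) (x y : H) : (n • x) * y = n • (x * y) := by
  induction n with
  | zero => simp
  | succ k ih => rw [succ_nsmul, succ_nsmul, add_mul, ih]

end Aux

/-- If `H` is a totally ordered commutative hemiring, `F` is a field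
with an `H`-pseudonorm, and `R` is a finite-dimensional `F`-algebra, then `R` admits an
`H`-pseudonorm. -/
theorem stmt_12 (H : Type*) [NonUnitalCommSemiring H] [LinearOrder H]
    (hadd : ∀ a b c : H, a < b → a + c < b + c)
    (hmul : ∀ a b c : H, a < b → 0 < c → a * c < b * c)
    (F : Type*) [Field F] (ν : F → H)
    (hν0 : ∀ r : F, 0 ≤ ν r) (hνeq : ∀ r : F, ν r = 0 ↔ r = 0)
    (hνsub : ∀ r s : F, ν (r - s) ≤ ν r + ν s)
    (hνmul : ∀ r s : F, ν (r * s) ≤ ν r * ν s)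
    (R : Type*) [Ring R] [Algebra F R] [FiniteDimensional F R] :
    ∃ nrm : R → H, (∀ a : R, 0 ≤ nrm a) ∧ (∀ a : R, nrm a = 0 ↔ a = 0) ∧
      (∀ a b : R, nrm (a - b) ≤ nrm a + nrm b) ∧
      (∀ a b : R, nrm (a * b) ≤ nrm a * nrm b) := by
  classical
  -- basic facts about ν
  have hν0' : ν (0 : F) = 0 := (hνeq 0).2 rfl
  have hνadd : ∀ r s : F, ν (r + s) ≤ ν r + ν s := by
    intro r s
    have h1 : ν (r + s) ≤ ν r + ν (-s) := by
      simpa [sub_neg_eq_add] using hνsub r (-s)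
    refine h1.trans (aux_add_le₂ hadd le_rfl ?_)
    have h2 : ν (-s) ≤ ν 0 + ν s := by simpa using hνsub 0 s
    simpa [hν0'] using h2
  have hνsum : ∀ {ι : Type _} (s : Finset ι) (f : ι → F),
      ν (∑ i ∈ s, f i) ≤ ∑ i ∈ s, ν (f i) := by
    intro ι s f
    induction s using Finset.induction with
    | empty => simp [hν0']
    | insert _ _ hi ih =>
      rw [Finset.sum_insert hi, Finset.sum_insert hi]
      exact (hνadd _ _).trans (aux_add_le₂ hadd le_rfl ih)
  -- choose a basis
  let ι := Module.Free.ChooseBasisIndex F R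
  let b : Module.Basis ι F R := Module.Free.chooseBasis F R
  set M0 : H := ∑ p : ι × ι × ι, ν (b.repr (b p.1 * b p.2.1) p.2.2) with hM0
  have hM0nn : 0 ≤ M0 := aux_sum_nonneg hadd _ _ fun _ _ => hν0 _
  have hν1 : 0 < ν (1 : F) := by
    rcases (hν0 1).lt_or_eq with h | h
    · exact h
    · exact absurd ((hνeq 1).1 h.symm) one_ne_zero
  set M : H := ν 1 + M0 with hM
  have hMpos : 0 < M := lt_of_lt_of_le hν1 (aux_le_add hadd _ hM0nn)
  set n : ℕ := Fintype.card ι with hn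
  set C : H := M + n • M with hC
  have hCpos : 0 < C := lt_of_lt_of_le hMpos (aux_le_add hadd _ (by
    induction n with
    | zero => simp
    | succ k ih => rw [succ_nsmul]; simpa using aux_add_le₂ hadd ih hMpos.le))
  have hnM_le_C : n • M ≤ M + n • M := by
    rw [add_comm]; exact aux_le_add hadd _ hMpos.le
  set S : R → H := fun a => ∑ i, ν (b.repr a i) with hS
  have hSnn : ∀ a, 0 ≤ S a := fun a => aux_sum_nonneg hadd _ _ fun _ _ => hν0 _
  refine ⟨fun a => C * S a, ?_, ?_, ?_, ?_⟩
  · intro a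
    exact aux_mul_nonneg hmul hCpos.le (hSnn a)
  · intro a
    constructor
    · intro h
      by_contra ha
      have hrepr : b.repr a ≠ 0 := fun h0 => ha (by
        have := congrArg b.repr.symm h0
        simpa using this)
      obtain ⟨i, hi⟩ : ∃ i, b.repr a i ≠ 0 := by
        by_contra hc
        push_neg at hc
        exact hrepr (Finsupp.ext hc)
      have h1 : 0 < ν (b.repr a i) := by
        rcases (hν0 _).lt_or_eq with h' | h'
        · exact h'
        · exact absurd ((hνeq _).1 h'.symm) hi
      have h2 : 0 < S a :=
        lt_of_lt_of_le h1 (aux_single_le_sum hadd _ _ (fun _ _ => hν0 _) (Finset.mem_univ i))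
      have h3 : 0 < C * S a := by
        have := hmul 0 C (S a) hCpos h2
        rwa [zero_mul] at this
      exact h3.ne' h
    · intro h
      subst h
      have h0 : S (0 : R) = 0 := by simp [hS, hν0']
      show C * S 0 = 0
      rw [h0, mul_zero]
  · intro a c
    have h1 : S (a - c) ≤ S a + S c := by
      rw [hS]
      simp only [map_sub, Finsupp.sub_apply]
      rw [← Finset.sum_add_distrib]
      exact aux_sum_le hadd _ _ _ fun i _ => hνsub _ _
    calc C * S (a - c) ≤ C * (S a + S c) := aux_mul_le_left hmul h1 hCpos.le
      _ = C * S a + C * S c := mul_add _ _ _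
  · intro a c
    -- expand a * c in the basis
    have hab : a * c = ∑ i, ∑ j, (b.repr a i * b.repr c j) • (b i * b j) := by
      conv_lhs => rw [← b.sum_repr a, ← b.sum_repr c]
      rw [Finset.sum_mul]
      refine Finset.sum_congr rfl fun i _ => ?_
      rw [Finset.mul_sum]
      refine Finset.sum_congr rfl fun j _ => ?_
      rw [smul_mul_assoc, mul_smul_comm, smul_smul]
    have hrepr : ∀ k, b.repr (a * c) k =
        ∑ i, ∑ j, (b.repr a i * b.repr c j) * b.repr (b i * b j) k := by
      intro k
      rw [hab]
      simp [map_sum, Finsupp.finset_sum_apply, smul_eq_mul]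
    -- bound each coordinate
    have hbound : ∀ k, ν (b.repr (a * c) k) ≤ (S a * S c) * M := by
      intro k
      rw [hrepr k]
      have step1 : ν (∑ i, ∑ j, (b.repr a i * b.repr c j) * b.repr (b i * b j) k)
          ≤ ∑ i : ι, ∑ j : ι, ν (b.repr a i) * ν (b.repr c j) * M := by
        refine (hνsum _ _).trans ?_
        refine aux_sum_le hadd _ _ _ fun i _ => ?_
        refine (hνsum _ _).trans ?_
        refine aux_sum_le hadd _ _ _ fun j _ => ?_
        have t1 : ν ((b.repr a i * b.repr c j) * b.repr (b i * b j) k)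
            ≤ ν (b.repr a i * b.repr c j) * ν (b.repr (b i * b j) k) := hνmul _ _
        have t2 : ν (b.repr a i * b.repr c j) * ν (b.repr (b i * b j) k)
            ≤ (ν (b.repr a i) * ν (b.repr c j)) * ν (b.repr (b i * b j) k) :=
          aux_mul_le hmul (hνmul _ _) (hν0 _)
        have t3 : ν (b.repr (b i * b j) k) ≤ M := by
          have h0 : ν (b.repr (b i * b j) k) ≤ M0 := by
            rw [hM0]
            exact aux_single_le_sum hadd _
              (fun p : ι × ι × ι => ν (b.repr (b p.1 * b p.2.1) p.2.2))
              (fun _ _ => hν0 _) (Finset.mem_univ (i, j, k))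
          refine h0.trans ?_
          rw [hM, add_comm]
          exact aux_le_add hadd _ hν1.le
        have t4 : (ν (b.repr a i) * ν (b.repr c j)) * ν (b.repr (b i * b j) k)
            ≤ (ν (b.repr a i) * ν (b.repr c j)) * M :=
          aux_mul_le_left hmul t3 (aux_mul_nonneg hmul (hν0 _) (hν0 _))
        exact t1.trans (t2.trans t4)
      refine step1.trans ?_
      have e1 : S a * S c = ∑ i : ι, ∑ j : ι, ν (b.repr a i) * ν (b.repr c j) := by
        rw [hS, Finset.sum_mul_sum]
      have : ∑ i : ι, ∑ j : ι, ν (b.repr a i) * ν (b.repr c j) * M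
          = (S a * S c) * M := by
        rw [e1, Finset.sum_mul]
        refine Finset.sum_congr rfl fun i _ => ?_
        rw [Finset.sum_mul]
      rw [this]
    -- sum over k
    have hSab : S (a * c) ≤ (S a * S c) * (n • M) := by
      have h1 : S (a * c) ≤ ∑ _k : ι, (S a * S c) * M :=
        aux_sum_le hadd _ _ _ fun k _ => hbound k
      refine h1.trans (le_of_eq ?_)
      rw [Finset.sum_const, Finset.card_univ, ← hn, mul_comm (S a * S c) (n • M),
        aux_nsmul_mul, mul_comm M (S a * S c)]
    have hSab' : S (a * c) ≤ (S a * S c) * C := by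
      refine hSab.trans ?_
      rw [mul_comm _ (n • M), mul_comm _ C]
      exact aux_mul_le hmul hnM_le_C (aux_mul_nonneg hmul (hSnn a) (hSnn c))
    calc C * S (a * c) ≤ C * ((S a * S c) * C) := aux_mul_le_left hmul hSab' hCpos.le
      _ = (C * S a) * (C * S c) := by
        rw [mul_comm (S a * S c) C, ← mul_assoc, mul_mul_mul_comm]
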